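/- Let μ > 0, v₀ > 0 and fix Λ > 0. For 0 < k < Λ define Σ_k^Λ(0) = −(1/(4π²)) ∫_k^Λ ∫_{−k}^{k} h(k,p,l)² · p · l / (8k · (e(p) + e(l))) ds dt, where p = (t+s)/2 and l = (t−s)/2. Then lim_{k→0⁺} Σ_k^Λ(0) = −∞. (Consequently no k-independent counterterm c^Λ can renormalize the self-energy.) -/

import Mathlib

open Real Filter Asymptotics Topology MeasureTheory

/-- Bogoliubov dispersion relation (contact interaction). -/
noncomputable def disp (μ k : ℝ) : ℝ := Real.sqrt (k^4/4 + μ*k^2)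

/-- Bogoliubov coefficient σ. -/
noncomputable def sig (μ k : ℝ) : ℝ :=
  Real.sqrt ((Real.sqrt ((disp μ k)^2 + μ^2) + disp μ k) / (2 * disp μ k))

/-- Bogoliubov coefficient γ. -/
noncomputable def gam (μ k : ℝ) : ℝ :=
  Real.sqrt ((Real.sqrt ((disp μ k)^2 + μ^2) - disp μ k) / (2 * disp μ k))

/-- Cubic coupling function h(k,p,l). -/
noncomputable def hcub (μ v₀ k p l : ℝ) : ℝ :=
  2 * Real.sqrt (μ * v₀) *
    (sig μ p * gam μ k * gam μ l + sig μ l * gam μ k * gam μ p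
      + sig μ p * sig μ l * sig μ k - gam μ p * sig μ k * sig μ l
      - gam μ l * sig μ k * sig μ p - gam μ p * gam μ l * gam μ k)

noncomputable def A1 (μ x y : ℝ) : ℝ := Real.sqrt ((x + y)^2 + 4*μ^2)
noncomputable def A2 (μ x y : ℝ) : ℝ := Real.sqrt ((x - y)^2 + 4*μ^2)

/-- The cutoff self-energy at z = 0, in the variables t = p+l, s = p−l. -/
noncomputable def SigmaCut0 (μ v₀ Λ k : ℝ) : ℝ :=
  -(1/(4*Real.pi^2)) * ∫ t in k..Λ, ∫ s in (-k)..k,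
    (hcub μ v₀ k ((t+s)/2) ((t-s)/2))^2 * ((t+s)/2) * ((t-s)/2)
      / (8*k*(disp μ ((t+s)/2) + disp μ ((t-s)/2)))

lemma disp_nonneg (μ k : ℝ) : 0 ≤ disp μ k := Real.sqrt_nonneg _

lemma disp_sq {μ : ℝ} (hμ : 0 ≤ μ) (k : ℝ) : (disp μ k)^2 = k^4/4 + μ*k^2 :=
  Real.sq_sqrt (by positivity)

lemma disp_pos {μ k : ℝ} (hμ : 0 < μ) (hk : 0 < k) : 0 < disp μ k :=
  Real.sqrt_pos.2 (by positivity)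

lemma disp_mono {μ a b : ℝ} (hμ : 0 ≤ μ) (ha : 0 ≤ a) (hab : a ≤ b) :
    disp μ a ≤ disp μ b := by
  apply Real.sqrt_le_sqrt
  nlinarith [sq_nonneg a, sq_nonneg b, mul_le_mul hab hab ha (ha.trans hab)]

lemma sqrtmu_mul_le {μ k : ℝ} (hμ : 0 ≤ μ) (hk : 0 ≤ k) :
    Real.sqrt μ * k ≤ disp μ k := by
  have h1 : Real.sqrt μ * k = Real.sqrt (μ * k^2) := by
    rw [Real.sqrt_mul hμ, Real.sqrt_sq hk]
  rw [h1]
  apply Real.sqrt_le_sqrt; nlinarith [sq_nonneg (k^2)]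

lemma disp_le_of {μ k : ℝ} (hμ : 0 ≤ μ) (hk : 0 ≤ k) (hk2 : k ≤ 2) :
    disp μ k ≤ k * Real.sqrt (μ+1) := by
  have h1 : k * Real.sqrt (μ+1) = Real.sqrt (k^2 * (μ+1)) := by
    rw [Real.sqrt_mul (by positivity), Real.sqrt_sq hk]
  rw [h1]
  apply Real.sqrt_le_sqrt
  nlinarith [mul_nonneg (sq_nonneg k) (by nlinarith : (0:ℝ) ≤ 4 - k^2)]

section coeffs
variable {μ x : ℝ}

lemma S_nonneg (μ x : ℝ) : 0 ≤ Real.sqrt ((disp μ x)^2 + μ^2) := Real.sqrt_nonneg _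

lemma S_ge_e (μ x : ℝ) : disp μ x ≤ Real.sqrt ((disp μ x)^2 + μ^2) :=
  (Real.le_sqrt (disp_nonneg μ x) (by positivity)).2 (by nlinarith [sq_nonneg μ])

lemma S_sq (μ x : ℝ) : (Real.sqrt ((disp μ x)^2 + μ^2))^2 = (disp μ x)^2 + μ^2 :=
  Real.sq_sqrt (by positivity)

lemma sig_nonneg (μ x : ℝ) : 0 ≤ sig μ x := Real.sqrt_nonneg _
lemma gam_nonneg (μ x : ℝ) : 0 ≤ gam μ x := Real.sqrt_nonneg _

lemma sig_sq (he : 0 < disp μ x) :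
    (sig μ x)^2 = (Real.sqrt ((disp μ x)^2 + μ^2) + disp μ x) / (2 * disp μ x) :=
  Real.sq_sqrt (by positivity)

lemma gam_sq (he : 0 < disp μ x) :
    (gam μ x)^2 = (Real.sqrt ((disp μ x)^2 + μ^2) - disp μ x) / (2 * disp μ x) :=
  Real.sq_sqrt (div_nonneg (by linarith [S_ge_e μ x]) (by positivity))

lemma sig_sq_sub_gam_sq (he : 0 < disp μ x) : (sig μ x)^2 - (gam μ x)^2 = 1 := by
  rw [sig_sq he, gam_sq he]
  field_simp
  ring

lemma gam_le_sig (he : 0 < disp μ x) : gam μ x ≤ sig μ x := by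
  apply Real.sqrt_le_sqrt
  exact (div_le_div_iff_of_pos_right (by positivity)).2 (by linarith)

lemma gam_le (hμ : 0 ≤ μ) (he : 0 < disp μ x) : gam μ x ≤ μ / (2 * disp μ x) := by
  set e := disp μ x with hedef
  set S := Real.sqrt ((disp μ x)^2 + μ^2) with hSdef
  have hS2 : S^2 = e^2 + μ^2 := S_sq μ x
  have hSe : e ≤ S := S_ge_e μ x
  have h1 : (S - e) / (2*e) ≤ (μ/(2*e))^2 := by
    rw [div_pow]
    rw [div_le_div_iff₀ (by positivity) (by positivity)]
    nlinarith [sq_nonneg (S - e)]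
  calc gam μ x ≤ Real.sqrt ((μ/(2*e))^2) := Real.sqrt_le_sqrt h1
    _ = μ/(2*e) := Real.sqrt_sq (by positivity)

lemma sig_le_one_add_gam (he : 0 < disp μ x) : sig μ x ≤ 1 + gam μ x := by
  have h1 : (sig μ x)^2 ≤ (1 + gam μ x)^2 := by
    nlinarith [sig_sq_sub_gam_sq he, gam_nonneg μ x]
  calc sig μ x = Real.sqrt ((sig μ x)^2) := (Real.sqrt_sq (sig_nonneg μ x)).symm
    _ ≤ Real.sqrt ((1 + gam μ x)^2) := Real.sqrt_le_sqrt h1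
    _ = 1 + gam μ x := Real.sqrt_sq (by linarith [gam_nonneg μ x])

lemma sig_le_sqrtM (hμ : 0 ≤ μ) (he : 0 < disp μ x) :
    sig μ x ≤ Real.sqrt (1 + μ/(2 * disp μ x)) := by
  apply Real.sqrt_le_sqrt
  set e := disp μ x
  set S := Real.sqrt ((disp μ x)^2 + μ^2) with hSdef
  have hS2 : S^2 = e^2 + μ^2 := S_sq μ x
  have hS0 : 0 ≤ S := S_nonneg μ x
  have hSle : S ≤ e + μ := by nlinarith
  rw [div_le_iff₀ (by positivity : (0:ℝ) < 2*e)]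
  have hcc : μ / (2*e) * (2*e) = μ := by field_simp
  nlinarith
lemma gam_le_sqrtM (hμ : 0 ≤ μ) (he : 0 < disp μ x) :
    gam μ x ≤ Real.sqrt (1 + μ/(2 * disp μ x)) :=
  (gam_le_sig he).trans (sig_le_sqrtM hμ he)

lemma gam_sq_ge (hμ : 0 < μ) (he : 0 < disp μ x) (heμ : disp μ x ≤ μ) :
    μ / (6 * disp μ x) ≤ (gam μ x)^2 := by
  rw [gam_sq he]
  set e := disp μ x
  set S := Real.sqrt ((disp μ x)^2 + μ^2) with hSdef
  have hS : e + μ/3 ≤ S := by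
    rw [hSdef]
    exact (Real.le_sqrt (by positivity) (by positivity)).2 (by nlinarith)
  rw [div_le_div_iff₀ (by positivity) (by positivity)]
  nlinarith

lemma sig_sub_gam_le (he : 0 < disp μ x) (hg : 0 < gam μ x) :
    sig μ x - gam μ x ≤ 1 / (2 * gam μ x) := by
  have h1 := sig_sq_sub_gam_sq he
  have h2 := gam_le_sig he
  rw [le_div_iff₀ (by positivity)]
  nlinarith [sq_nonneg (sig μ x - gam μ x)]

lemma sig_mul_sig_sub (hp : 0 < disp μ x) {y : ℝ} (hl : 0 < disp μ y) :
    1 ≤ sig μ x * sig μ y - gam μ x * gam μ y := by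
  have h1 := sig_sq_sub_gam_sq hp
  have h2 := sig_sq_sub_gam_sq (x := y) hl
  have h3 : (1 + gam μ x * gam μ y)^2 ≤ (sig μ x * sig μ y)^2 := by
    nlinarith [sq_nonneg (gam μ x - gam μ y)]
  have h4 : 1 + gam μ x * gam μ y ≤ sig μ x * sig μ y := by
    have h5 := Real.sqrt_le_sqrt h3
    rwa [Real.sqrt_sq (by nlinarith [mul_nonneg (gam_nonneg μ x) (gam_nonneg μ y)]),
      Real.sqrt_sq (mul_nonneg (sig_nonneg μ x) (sig_nonneg μ y))] at h5
  nlinarith [mul_nonneg (gam_nonneg μ x) (gam_nonneg μ y)]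

end coeffs



@[fun_prop] lemma continuous_disp (μ : ℝ) : Continuous (disp μ) := by
  unfold disp; fun_prop

@[fun_prop] lemma measurable_disp (μ : ℝ) : Measurable (disp μ) :=
  (continuous_disp μ).measurable

@[fun_prop] lemma measurable_sqrt' : Measurable Real.sqrt := Real.continuous_sqrt.measurable

lemma measurable_sig (μ : ℝ) : Measurable (sig μ) := by
  unfold sig
  apply Real.continuous_sqrt.measurable.comp
  apply Measurable.div
  · fun_prop
  · fun_prop

lemma measurable_gam (μ : ℝ) : Measurable (gam μ) := by
  unfold gam
  apply Real.continuous_sqrt.measurable.comp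
  apply Measurable.div
  · fun_prop
  · fun_prop

lemma continuousAt_sig {μ x : ℝ} (hμ : 0 < μ) (hx : 0 < x) :
    ContinuousAt (sig μ) x := by
  have he := disp_pos hμ hx
  unfold sig
  apply Real.continuous_sqrt.continuousAt.comp
  apply ContinuousAt.div
  · fun_prop
  · fun_prop
  · positivity

lemma continuousAt_gam {μ x : ℝ} (hμ : 0 < μ) (hx : 0 < x) :
    ContinuousAt (gam μ) x := by
  have he := disp_pos hμ hx
  unfold gam
  apply Real.continuous_sqrt.continuousAt.comp
  apply ContinuousAt.div
  · fun_prop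
  · fun_prop
  · positivity

lemma mul3_le {a b c a' b' c' : ℝ} (ha : 0 ≤ a) (hb : 0 ≤ b) (hc : 0 ≤ c)
    (h1 : a ≤ a') (h2 : b ≤ b') (h3 : c ≤ c') : a*b*c ≤ a'*b'*c' := by
  have hb' : 0 ≤ b' := hb.trans h2
  have ha' : 0 ≤ a' := ha.trans h1
  exact mul_le_mul (mul_le_mul h1 h2 hb ha') h3 hc (mul_nonneg ha' hb')

/-- Upper bound on `hcub²`. -/
lemma hcub_sq_le {μ v₀ k p l : ℝ} (hμ : 0 < μ) (hv : 0 < v₀)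
    (hk : 0 < k) (hp : 0 < p) (hl : 0 < l) :
    (hcub μ v₀ k p l)^2 ≤ 36*(μ*v₀) * ((1+μ/(2*disp μ k)) * (1+μ/(2*disp μ p)) * (1+μ/(2*disp μ l))) := by
  have hek := disp_pos hμ hk
  have hep := disp_pos hμ hp
  have hel := disp_pos hμ hl
  set Mk := Real.sqrt (1+μ/(2*disp μ k)) with hMk
  set Mp := Real.sqrt (1+μ/(2*disp μ p)) with hMp
  set Ml := Real.sqrt (1+μ/(2*disp μ l)) with hMl
  have hMk0 : 0 ≤ Mk := Real.sqrt_nonneg _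
  have hMp0 : 0 ≤ Mp := Real.sqrt_nonneg _
  have hMl0 : 0 ≤ Ml := Real.sqrt_nonneg _
  have hsk : sig μ k ≤ Mk := sig_le_sqrtM hμ.le hek
  have hgk : gam μ k ≤ Mk := gam_le_sqrtM hμ.le hek
  have hsp : sig μ p ≤ Mp := sig_le_sqrtM hμ.le hep
  have hgp : gam μ p ≤ Mp := gam_le_sqrtM hμ.le hep
  have hsl : sig μ l ≤ Ml := sig_le_sqrtM hμ.le hel
  have hgl : gam μ l ≤ Ml := gam_le_sqrtM hμ.le hel
  set T := Mk * Mp * Ml with hT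
  have hT0 : 0 ≤ T := by positivity
  have e1 : sig μ p * gam μ k * gam μ l ≤ T := by
    have := mul3_le (sig_nonneg μ p) (gam_nonneg μ k) (gam_nonneg μ l) hsp hgk hgl
    nlinarith
  have e2 : sig μ l * gam μ k * gam μ p ≤ T := by
    have := mul3_le (sig_nonneg μ l) (gam_nonneg μ k) (gam_nonneg μ p) hsl hgk hgp
    nlinarith
  have e3 : sig μ p * sig μ l * sig μ k ≤ T := by
    have := mul3_le (sig_nonneg μ p) (sig_nonneg μ l) (sig_nonneg μ k) hsp hsl hsk
    nlinarith
  have e4 : gam μ p * sig μ k * sig μ l ≤ T := by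
    have := mul3_le (gam_nonneg μ p) (sig_nonneg μ k) (sig_nonneg μ l) hgp hsk hsl
    nlinarith
  have e5 : gam μ l * sig μ k * sig μ p ≤ T := by
    have := mul3_le (gam_nonneg μ l) (sig_nonneg μ k) (sig_nonneg μ p) hgl hsk hsp
    nlinarith
  have e6 : gam μ p * gam μ l * gam μ k ≤ T := by
    have := mul3_le (gam_nonneg μ p) (gam_nonneg μ l) (gam_nonneg μ k) hgp hgl hgk
    nlinarith
  have n1 : 0 ≤ sig μ p * gam μ k * gam μ l :=
    mul_nonneg (mul_nonneg (sig_nonneg μ p) (gam_nonneg μ k)) (gam_nonneg μ l)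
  have n2 : 0 ≤ sig μ l * gam μ k * gam μ p :=
    mul_nonneg (mul_nonneg (sig_nonneg μ l) (gam_nonneg μ k)) (gam_nonneg μ p)
  have n3 : 0 ≤ sig μ p * sig μ l * sig μ k :=
    mul_nonneg (mul_nonneg (sig_nonneg μ p) (sig_nonneg μ l)) (sig_nonneg μ k)
  have n4 : 0 ≤ gam μ p * sig μ k * sig μ l :=
    mul_nonneg (mul_nonneg (gam_nonneg μ p) (sig_nonneg μ k)) (sig_nonneg μ l)
  have n5 : 0 ≤ gam μ l * sig μ k * sig μ p :=
    mul_nonneg (mul_nonneg (gam_nonneg μ l) (sig_nonneg μ k)) (sig_nonneg μ p)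
  have n6 : 0 ≤ gam μ p * gam μ l * gam μ k :=
    mul_nonneg (mul_nonneg (gam_nonneg μ p) (gam_nonneg μ l)) (gam_nonneg μ k)
  set E := sig μ p * gam μ k * gam μ l + sig μ l * gam μ k * gam μ p
      + sig μ p * sig μ l * sig μ k - gam μ p * sig μ k * sig μ l
      - gam μ l * sig μ k * sig μ p - gam μ p * gam μ l * gam μ k with hE
  have hEub : E ≤ 3*T := by rw [hE]; linarith
  have hElb : -(3*T) ≤ E := by rw [hE]; linarith
  have hE2 : E^2 ≤ 9*T^2 := by
    have := sq_le_sq' hElb hEub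
    calc E^2 ≤ (3*T)^2 := this
      _ = 9*T^2 := by ring
  have hsq : (Real.sqrt (μ*v₀))^2 = μ*v₀ := Real.sq_sqrt (by positivity)
  have hT2 : T^2 = (1+μ/(2*disp μ k)) * (1+μ/(2*disp μ p)) * (1+μ/(2*disp μ l)) := by
    rw [hT, hMk, hMp, hMl]
    rw [mul_pow, mul_pow, Real.sq_sqrt (by positivity), Real.sq_sqrt (by positivity),
      Real.sq_sqrt (by positivity)]
  have h0 : hcub μ v₀ k p l = 2 * Real.sqrt (μ*v₀) * E := by rw [hE]; rfl
  have : (hcub μ v₀ k p l)^2 = 4*(μ*v₀)*E^2 := by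
    rw [h0, mul_pow, mul_pow, hsq]; ring
  rw [this, ← hT2]
  calc 4*(μ*v₀)*E^2 ≤ 4*(μ*v₀)*(9*T^2) := by
        apply mul_le_mul_of_nonneg_left hE2 (by positivity)
    _ = 36*(μ*v₀)*T^2 := by ring

/-- Lower bound on `hcub` in the good region. -/
lemma hcub_ge {μ v₀ k p l G : ℝ} (hμ : 0 < μ) (hv : 0 < v₀)
    (hk : 0 < k) (hp : 0 < p) (hl : 0 < l) (hG : 0 < G)
    (hgp : gam μ p ≤ G) (hgl : gam μ l ≤ G)
    (hγk : 2*(1+G)*G ≤ (gam μ k)^2) :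
    Real.sqrt (μ*v₀) * gam μ k ≤ hcub μ v₀ k p l := by
  have hek := disp_pos hμ hk
  have hep := disp_pos hμ hp
  have hel := disp_pos hμ hl
  have hγk0 : 0 < gam μ k := by nlinarith [gam_nonneg μ k]
  have hsp : sig μ p ≤ 1 + G := (sig_le_one_add_gam hep).trans (by linarith)
  have hsl : sig μ l ≤ 1 + G := (sig_le_one_add_gam hel).trans (by linarith)
  have hsgk : gam μ k ≤ sig μ k := gam_le_sig hek
  have hdiff : sig μ k - gam μ k ≤ 1/(2*gam μ k) := sig_sub_gam_le hek hγk0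
  have hprod : 1 ≤ sig μ p * sig μ l - gam μ p * gam μ l := sig_mul_sig_sub hep hel
  -- A bound
  have hA : sig μ p * gam μ l + sig μ l * gam μ p - gam μ p * gam μ l ≤ 2*(1+G)*G := by
    have t1 : sig μ p * gam μ l ≤ (1+G)*G :=
      mul_le_mul hsp hgl (gam_nonneg μ l) (by linarith)
    have t2 : sig μ l * gam μ p ≤ (1+G)*G :=
      mul_le_mul hsl hgp (gam_nonneg μ p) (by linarith)
    nlinarith [mul_nonneg (gam_nonneg μ p) (gam_nonneg μ l)]
  set A := sig μ p * gam μ l + sig μ l * gam μ p - gam μ p * gam μ l with hAdef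
  set E := sig μ p * gam μ k * gam μ l + sig μ l * gam μ k * gam μ p
      + sig μ p * sig μ l * sig μ k - gam μ p * sig μ k * sig μ l
      - gam μ l * sig μ k * sig μ p - gam μ p * gam μ l * gam μ k with hE
  have hid : E = sig μ k * (sig μ p * sig μ l - gam μ p * gam μ l)
      - (sig μ k - gam μ k) * A := by rw [hE, hAdef]; ring
  have hsk0 : 0 ≤ sig μ k := sig_nonneg μ k
  have hstep1 : sig μ k - (sig μ k - gam μ k) * A ≤ E := by
    rw [hid]
    have h1 : sig μ k * 1 ≤ sig μ k * (sig μ p * sig μ l - gam μ p * gam μ l) :=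
      mul_le_mul_of_nonneg_left hprod hsk0
    linarith
  have hstep2 : (sig μ k - gam μ k) * A ≤ (1/(2*gam μ k)) * (2*(1+G)*G) := by
    have hd0 : 0 ≤ sig μ k - gam μ k := by linarith
    have hAle : A ≤ 2*(1+G)*G := hA
    calc (sig μ k - gam μ k) * A ≤ (sig μ k - gam μ k) * (2*(1+G)*G) := by
          apply mul_le_mul_of_nonneg_left hAle hd0
      _ ≤ (1/(2*gam μ k)) * (2*(1+G)*G) := by
          apply mul_le_mul_of_nonneg_right hdiff (by positivity)
  have hstep3 : (1/(2*gam μ k)) * (2*(1+G)*G) ≤ gam μ k / 2 := by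
    have hrw : (1/(2*gam μ k)) * (2*(1+G)*G) = (2*(1+G)*G) / (2*gam μ k) := by ring
    rw [hrw, div_le_div_iff₀ (by positivity) (by norm_num : (0:ℝ) < 2)]
    nlinarith
  have hEge : gam μ k / 2 ≤ E := by
    have := hstep1
    have h4 : gam μ k - gam μ k/2 ≤ sig μ k - (sig μ k - gam μ k)*A := by
      have : (sig μ k - gam μ k) * A ≤ gam μ k / 2 := hstep2.trans hstep3
      linarith
    linarith
  have hsq0 : 0 ≤ Real.sqrt (μ*v₀) := Real.sqrt_nonneg _
  have h0 : hcub μ v₀ k p l = 2 * Real.sqrt (μ*v₀) * E := by rw [hE]; rfl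
  rw [h0]
  calc Real.sqrt (μ*v₀) * gam μ k = 2 * Real.sqrt (μ*v₀) * (gam μ k / 2) := by ring
    _ ≤ 2 * Real.sqrt (μ*v₀) * E := by
        apply mul_le_mul_of_nonneg_left hEge (by positivity)

attribute [fun_prop] measurable_sig measurable_gam

/-- Nonnegativity of the integrand. -/
lemma Fint_nonneg {μ v₀ k t s : ℝ} (hk : 0 < k) (hs1 : -k ≤ s) (hs2 : s ≤ k) (ht : k ≤ t) :
    0 ≤ (hcub μ v₀ k ((t+s)/2) ((t-s)/2))^2 * ((t+s)/2) * ((t-s)/2)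
      / (8*k*(disp μ ((t+s)/2) + disp μ ((t-s)/2))) := by
  have hp : 0 ≤ (t+s)/2 := by linarith
  have hl : 0 ≤ (t-s)/2 := by linarith
  have hd1 := disp_nonneg μ ((t+s)/2)
  have hd2 := disp_nonneg μ ((t-s)/2)
  apply div_nonneg
  · exact mul_nonneg (mul_nonneg (sq_nonneg _) hp) hl
  · nlinarith

/-- Continuity of the integrand in `s`. -/
lemma Fint_contOn {μ v₀ k t : ℝ} (hμ : 0 < μ) (hk : 0 < k) (ht : k < t) :
    ContinuousOn (fun s => (hcub μ v₀ k ((t+s)/2) ((t-s)/2))^2 * ((t+s)/2) * ((t-s)/2)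
      / (8*k*(disp μ ((t+s)/2) + disp μ ((t-s)/2)))) (Set.Icc (-k) k) := by
  intro s hs
  obtain ⟨hs1, hs2⟩ := hs
  have hp : 0 < (t+s)/2 := by linarith
  have hl : 0 < (t-s)/2 := by linarith
  apply ContinuousAt.continuousWithinAt
  have c1 : ContinuousAt (fun s : ℝ => (t+s)/2) s := by fun_prop
  have c2 : ContinuousAt (fun s : ℝ => (t-s)/2) s := by fun_prop
  have csp : ContinuousAt (fun s : ℝ => sig μ ((t+s)/2)) s :=
    ContinuousAt.comp (f := fun s : ℝ => (t+s)/2) (x := s) (continuousAt_sig hμ hp) c1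
  have cgp : ContinuousAt (fun s : ℝ => gam μ ((t+s)/2)) s :=
    ContinuousAt.comp (f := fun s : ℝ => (t+s)/2) (x := s) (continuousAt_gam hμ hp) c1
  have csl : ContinuousAt (fun s : ℝ => sig μ ((t-s)/2)) s :=
    ContinuousAt.comp (f := fun s : ℝ => (t-s)/2) (x := s) (continuousAt_sig hμ hl) c2
  have cgl : ContinuousAt (fun s : ℝ => gam μ ((t-s)/2)) s :=
    ContinuousAt.comp (f := fun s : ℝ => (t-s)/2) (x := s) (continuousAt_gam hμ hl) c2
  have cdp : ContinuousAt (fun s : ℝ => disp μ ((t+s)/2)) s :=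
    ((continuous_disp μ).continuousAt).comp c1
  have cdl : ContinuousAt (fun s : ℝ => disp μ ((t-s)/2)) s :=
    ((continuous_disp μ).continuousAt).comp c2
  have hhc : ContinuousAt (fun s : ℝ => hcub μ v₀ k ((t+s)/2) ((t-s)/2)) s := by
    unfold hcub
    have hT1 : ContinuousAt (fun s : ℝ => sig μ ((t+s)/2) * gam μ k * gam μ ((t-s)/2)) s :=
      (csp.mul continuousAt_const).mul cgl
    have hT2 : ContinuousAt (fun s : ℝ => sig μ ((t-s)/2) * gam μ k * gam μ ((t+s)/2)) s :=
      (csl.mul continuousAt_const).mul cgp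
    have hT3 : ContinuousAt (fun s : ℝ => sig μ ((t+s)/2) * sig μ ((t-s)/2) * sig μ k) s :=
      (csp.mul csl).mul continuousAt_const
    have hT4 : ContinuousAt (fun s : ℝ => gam μ ((t+s)/2) * sig μ k * sig μ ((t-s)/2)) s :=
      (cgp.mul continuousAt_const).mul csl
    have hT5 : ContinuousAt (fun s : ℝ => gam μ ((t-s)/2) * sig μ k * sig μ ((t+s)/2)) s :=
      (cgl.mul continuousAt_const).mul csp
    have hT6 : ContinuousAt (fun s : ℝ => gam μ ((t+s)/2) * gam μ ((t-s)/2) * gam μ k) s :=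
      (cgp.mul cgl).mul continuousAt_const
    exact continuousAt_const.mul (((((hT1.add hT2).add hT3).sub hT4).sub hT5).sub hT6)
  have hdp := disp_pos hμ hp
  have hdl := disp_pos hμ hl
  apply ContinuousAt.div
  · exact ((hhc.pow 2).mul c1).mul c2
  · exact continuousAt_const.mul (cdp.add cdl)
  · nlinarith

/-- Joint measurability of the integrand. -/
lemma Fint_meas (μ v₀ k : ℝ) : StronglyMeasurable (Function.uncurry (fun t s : ℝ =>
    (hcub μ v₀ k ((t+s)/2) ((t-s)/2))^2 * ((t+s)/2) * ((t-s)/2)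
      / (8*k*(disp μ ((t+s)/2) + disp μ ((t-s)/2))))) := by
  apply Measurable.stronglyMeasurable
  unfold Function.uncurry hcub
  fun_prop

/-- Upper bound on the integrand. -/
lemma Fint_ub {μ v₀ Λ k t s : ℝ} (hμ : 0 < μ) (hv : 0 < v₀) (hk : 0 < k)
    (ht1 : k < t) (ht2 : t ≤ Λ) (hs1 : -k ≤ s) (hs2 : s ≤ k) :
    (hcub μ v₀ k ((t+s)/2) ((t-s)/2))^2 * ((t+s)/2) * ((t-s)/2)
      / (8*k*(disp μ ((t+s)/2) + disp μ ((t-s)/2)))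
    ≤ 36*(μ*v₀)*((1+μ/(2*disp μ k)) * ((Λ + Real.sqrt μ/2)*(Λ + Real.sqrt μ/2)))
      / (8*k*disp μ (k/2)) := by
  set p := (t+s)/2 with hpdef
  set l := (t-s)/2 with hldef
  have hp : 0 < p := by rw [hpdef]; linarith
  have hl : 0 < l := by rw [hldef]; linarith
  have hpΛ : p ≤ Λ := by rw [hpdef]; linarith
  have hlΛ : l ≤ Λ := by rw [hldef]; linarith
  have hek := disp_pos hμ hk
  have hep := disp_pos hμ hp
  have hel := disp_pos hμ hl
  have hB0 : 0 ≤ Λ + Real.sqrt μ/2 := by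
    have := Real.sqrt_nonneg μ; linarith
  have hMprod : ∀ x : ℝ, 0 < x → x ≤ Λ → (1+μ/(2*disp μ x))*x ≤ Λ + Real.sqrt μ/2 := by
    intro x hx hxΛ
    have hex := disp_pos hμ hx
    have h1 : Real.sqrt μ * x ≤ disp μ x := sqrtmu_mul_le hμ.le hx.le
    have h2 : μ*x ≤ Real.sqrt μ * disp μ x := by
      nlinarith [Real.sq_sqrt hμ.le, Real.sqrt_nonneg μ]
    have h3 : μ/(2*disp μ x)*x ≤ Real.sqrt μ/2 := by
      rw [div_mul_eq_mul_div, div_le_div_iff₀ (by positivity) (by norm_num : (0:ℝ) < 2)]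
      nlinarith
    nlinarith
  have hMp := hMprod p hp hpΛ
  have hMl := hMprod l hl hlΛ
  have hub := hcub_sq_le (k := k) (p := p) (l := l) hμ hv hk hp hl
  have hden : disp μ (k/2) ≤ disp μ p + disp μ l := by
    rcases le_total p l with h | h
    · have h2 : k/2 ≤ l := by rw [hldef] at *; rw [hpdef] at h; linarith
      have := disp_mono hμ.le (by positivity : (0:ℝ) ≤ k/2) h2
      linarith [disp_nonneg μ p]
    · have h2 : k/2 ≤ p := by rw [hldef] at h; rw [hpdef] at *; linarith
      have := disp_mono hμ.le (by positivity : (0:ℝ) ≤ k/2) h2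
      linarith [disp_nonneg μ l]
  have hek2 := disp_pos hμ (by positivity : (0:ℝ) < k/2)
  set Mk := 1+μ/(2*disp μ k) with hMkdef
  set Mp := 1+μ/(2*disp μ p) with hMpdef
  set Ml := 1+μ/(2*disp μ l) with hMldef
  have hMk0 : 0 ≤ Mk := by rw [hMkdef]; positivity
  have hMp0 : 0 ≤ Mp := by rw [hMpdef]; positivity
  have hMl0 : 0 ≤ Ml := by rw [hMldef]; positivity
  have hnum : (hcub μ v₀ k p l)^2 * p * l
      ≤ 36*(μ*v₀)*(Mk * ((Λ + Real.sqrt μ/2)*(Λ + Real.sqrt μ/2))) := by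
    have s1 : (hcub μ v₀ k p l)^2 * p * l ≤ (36*(μ*v₀)*(Mk*Mp*Ml)) * p * l := by
      apply mul_le_mul_of_nonneg_right (mul_le_mul_of_nonneg_right hub hp.le) hl.le
    have s2 : (36*(μ*v₀)*(Mk*Mp*Ml)) * p * l
        = 36*(μ*v₀)*Mk * ((Mp*p) * (Ml*l)) := by ring
    have s3 : (Mp*p) * (Ml*l) ≤ (Λ + Real.sqrt μ/2)*(Λ + Real.sqrt μ/2) := by
      apply mul_le_mul hMp hMl (by positivity) hB0
    calc (hcub μ v₀ k p l)^2 * p * l ≤ 36*(μ*v₀)*Mk * ((Mp*p) * (Ml*l)) := by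
          rw [← s2]; exact s1
      _ ≤ 36*(μ*v₀)*Mk * ((Λ + Real.sqrt μ/2)*(Λ + Real.sqrt μ/2)) := by
          apply mul_le_mul_of_nonneg_left s3 (by positivity)
      _ = 36*(μ*v₀)*(Mk * ((Λ + Real.sqrt μ/2)*(Λ + Real.sqrt μ/2))) := by ring
  apply div_le_div₀ (by positivity) hnum (by positivity)
  nlinarith [disp_nonneg μ p, disp_nonneg μ l]

/-- Lower bound on the integrand in the good region. -/
lemma Fint_lb {μ v₀ Λ k t s : ℝ} (hμ : 0 < μ) (hv : 0 < v₀) (hΛ : 0 < Λ) (hk : 0 < k)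
    (hkΛ : k ≤ Λ/4)
    (hγk : 2*(1+μ/(2*disp μ (Λ/8)))*(μ/(2*disp μ (Λ/8))) ≤ (gam μ k)^2)
    (ht1 : Λ/2 ≤ t) (ht2 : t ≤ Λ) (hs1 : -k ≤ s) (hs2 : s ≤ k) :
    μ*v₀*(gam μ k)^2*(Λ/8)*(Λ/8) / (8*k*(2*disp μ Λ))
    ≤ (hcub μ v₀ k ((t+s)/2) ((t-s)/2))^2 * ((t+s)/2) * ((t-s)/2)
      / (8*k*(disp μ ((t+s)/2) + disp μ ((t-s)/2))) := by
  set p := (t+s)/2 with hpdef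
  set l := (t-s)/2 with hldef
  have hp8 : Λ/8 ≤ p := by rw [hpdef]; linarith
  have hl8 : Λ/8 ≤ l := by rw [hldef]; linarith
  have hp : 0 < p := lt_of_lt_of_le (by positivity) hp8
  have hl : 0 < l := lt_of_lt_of_le (by positivity) hl8
  have hpΛ : p ≤ Λ := by rw [hpdef]; linarith
  have hlΛ : l ≤ Λ := by rw [hldef]; linarith
  have he8 := disp_pos hμ (by positivity : (0:ℝ) < Λ/8)
  set G := μ/(2*disp μ (Λ/8)) with hGdef
  have hG : 0 < G := by rw [hGdef]; positivity
  have hgp : gam μ p ≤ G := by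
    refine (gam_le hμ.le (disp_pos hμ hp)).trans ?_
    rw [hGdef]
    apply div_le_div_of_nonneg_left hμ.le (by positivity)
    have := disp_mono hμ.le (by positivity : (0:ℝ) ≤ Λ/8) hp8
    linarith
  have hgl : gam μ l ≤ G := by
    refine (gam_le hμ.le (disp_pos hμ hl)).trans ?_
    rw [hGdef]
    apply div_le_div_of_nonneg_left hμ.le (by positivity)
    have := disp_mono hμ.le (by positivity : (0:ℝ) ≤ Λ/8) hl8
    linarith
  have hlb := hcub_ge hμ hv hk hp hl hG hgp hgl hγk
  have hsqv : 0 ≤ Real.sqrt (μ*v₀) := Real.sqrt_nonneg _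
  have hgk0 : 0 ≤ gam μ k := gam_nonneg μ k
  have hh0 : 0 ≤ Real.sqrt (μ*v₀) * gam μ k := mul_nonneg hsqv hgk0
  have hsq : (Real.sqrt (μ*v₀) * gam μ k)^2 ≤ (hcub μ v₀ k p l)^2 := by
    apply pow_le_pow_left₀ hh0 hlb
  have hsqeq : (Real.sqrt (μ*v₀) * gam μ k)^2 = μ*v₀*(gam μ k)^2 := by
    rw [mul_pow, Real.sq_sqrt (by positivity)]
  have hnum : μ*v₀*(gam μ k)^2*(Λ/8)*(Λ/8) ≤ (hcub μ v₀ k p l)^2 * p * l := by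
    have h1 : μ*v₀*(gam μ k)^2 ≤ (hcub μ v₀ k p l)^2 := by rw [← hsqeq]; exact hsq
    apply mul3_le (by positivity) (by positivity) (by positivity) h1 hp8 hl8
  have hden : disp μ p + disp μ l ≤ 2*disp μ Λ := by
    have h1 := disp_mono hμ.le hp.le hpΛ
    have h2 := disp_mono hμ.le hl.le hlΛ
    linarith
  have heΛ := disp_pos hμ hΛ
  have hep := disp_pos hμ hp
  have hel := disp_pos hμ hl
  apply div_le_div₀ (by positivity) hnum (by positivity)
  nlinarith


theorem stmt17 (μ v₀ Λ : ℝ) (hμ : 0 < μ) (hv : 0 < v₀) (hΛ : 0 < Λ) :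
    Tendsto (fun k => SigmaCut0 μ v₀ Λ k) (𝓝[>] (0:ℝ)) atBot := by
  have hπ := Real.pi_pos
  have he8 := disp_pos hμ (show (0:ℝ) < Λ/8 by positivity)
  have heΛ := disp_pos hμ hΛ
  set G := μ/(2*disp μ (Λ/8)) with hGdef
  have hG : 0 < G := by positivity
  set Am := 2*(1+G)*G with hAmdef
  have hAm0 : 0 < Am := by positivity
  set sq1 := Real.sqrt (μ+1) with hsq1def
  have hsq1pos : 0 < sq1 := Real.sqrt_pos.2 (by linarith)
  set δ := min μ (μ/(6*Am)) with hδdef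
  have hδ0 : 0 < δ := lt_min hμ (by positivity)
  set k₀ := min (min 1 (Λ/4)) (δ/sq1) with hk₀def
  have hk₀0 : 0 < k₀ := lt_min (lt_min one_pos (by positivity)) (by positivity)
  set c₀ := μ^2*v₀*Λ^2 / (6144 * sq1 * disp μ Λ) with hc₀def
  have hc₀0 : 0 < c₀ := by positivity
  set D := Λ*c₀/(4*Real.pi^2) with hDdef
  have hD0 : 0 < D := by positivity
  have hlim : Tendsto (fun k : ℝ => -(D * k⁻¹)) (𝓝[>] (0:ℝ)) atBot := by
    have h1 : Tendsto (fun k : ℝ => k⁻¹) (𝓝[>] (0:ℝ)) atTop := tendsto_inv_nhdsGT_zero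
    have h2 : Tendsto (fun k : ℝ => D * k⁻¹) (𝓝[>] (0:ℝ)) atTop := h1.const_mul_atTop hD0
    exact tendsto_neg_atTop_atBot.comp h2
  apply tendsto_atBot_mono' _ ?_ hlim
  filter_upwards [Ioo_mem_nhdsGT_of_mem (Set.left_mem_Ico.2 hk₀0)] with k hk
  obtain ⟨hk0, hkk₀⟩ := hk
  have hk1 : k ≤ 1 := le_trans hkk₀.le ((min_le_left _ _).trans (min_le_left _ _))
  have hkΛ4 : k ≤ Λ/4 := le_trans hkk₀.le ((min_le_left _ _).trans (min_le_right _ _))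
  have hkδs : k ≤ δ/sq1 := le_trans hkk₀.le (min_le_right _ _)
  have hkΛ : k < Λ := by linarith
  have hkhalf : k ≤ Λ/2 := by linarith
  have hek := disp_pos hμ hk0
  have hek2 := disp_pos hμ (show (0:ℝ) < k/2 by positivity)
  have hkδ : disp μ k ≤ δ := by
    have h1 : disp μ k ≤ k * sq1 := disp_le_of hμ.le hk0.le (by linarith)
    have h2 : k * sq1 ≤ δ := by
      rw [← le_div_iff₀ hsq1pos]; exact hkδs
    linarith
  have hγk : Am ≤ (gam μ k)^2 := by
    have hkμ : disp μ k ≤ μ := hkδ.trans (min_le_left _ _)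
    have hkδ2 : disp μ k ≤ μ/(6*Am) := hkδ.trans (min_le_right _ _)
    have h6 : Am ≤ μ/(6*disp μ k) := by
      rw [le_div_iff₀ (by positivity)]
      have h7 : disp μ k * (6*Am) ≤ μ := by
        have := (le_div_iff₀ (show (0:ℝ) < 6*Am by positivity)).1 hkδ2
        linarith
      nlinarith
    exact h6.trans (gam_sq_ge hμ hek hkμ)
  -- main estimate for this k
  set F : ℝ → ℝ → ℝ := fun t s =>
    (hcub μ v₀ k ((t+s)/2) ((t-s)/2))^2 * ((t+s)/2) * ((t-s)/2)
      / (8*k*(disp μ ((t+s)/2) + disp μ ((t-s)/2))) with hFdef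
  set g : ℝ → ℝ := fun t => ∫ s in (-k)..k, F t s with hgdef
  have hSig : SigmaCut0 μ v₀ Λ k = -(1/(4*Real.pi^2)) * ∫ t in k..Λ, g t := rfl
  set Cb := 36*(μ*v₀)*((1+μ/(2*disp μ k)) * ((Λ + Real.sqrt μ/2)*(Λ + Real.sqrt μ/2)))
      / (8*k*disp μ (k/2)) with hCbdef
  -- integrability of g
  have hgmeas : StronglyMeasurable g := by
    have heq : g = fun t => ∫ s in Set.Ioc (-k) k, F t s := by
      funext t
      rw [hgdef]
      exact intervalIntegral.integral_of_le (by linarith)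
    rw [heq]
    exact (Fint_meas μ v₀ k).integral_prod_right
  have hFcont : ∀ t, k < t → IntervalIntegrable (F t) volume (-k) k := by
    intro t ht
    apply ContinuousOn.intervalIntegrable
    rw [Set.uIcc_of_le (by linarith)]
    exact Fint_contOn hμ hk0 ht
  have hgnonneg : ∀ t, k ≤ t → 0 ≤ g t := by
    intro t ht
    apply intervalIntegral.integral_nonneg (by linarith)
    intro s hs
    exact Fint_nonneg hk0 hs.1 hs.2 ht
  have hgbound : ∀ t ∈ Set.Ioc k Λ, g t ≤ (k - (-k)) * Cb := by
    intro t ht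
    have h1 : g t ≤ ∫ _ in (-k)..k, Cb := by
      apply intervalIntegral.integral_mono_on (by linarith) (hFcont t ht.1)
        intervalIntegrable_const
      intro s hs
      exact Fint_ub hμ hv hk0 ht.1 ht.2 hs.1 hs.2
    rwa [intervalIntegral.integral_const, smul_eq_mul] at h1
  have hgint : IntervalIntegrable g volume k Λ := by
    rw [intervalIntegrable_iff, Set.uIoc_of_le hkΛ.le]
    have hconst : IntegrableOn (fun _ : ℝ => (k - (-k)) * Cb) (Set.Ioc k Λ) volume := by
      exact integrableOn_const measure_Ioc_lt_top.ne
    apply hconst.mono' hgmeas.aestronglyMeasurable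
    filter_upwards [ae_restrict_mem measurableSet_Ioc] with t ht
    rw [Real.norm_eq_abs, abs_of_nonneg (hgnonneg t ht.1.le)]
    exact hgbound t ht
  -- lower bound on the inner integral for t ∈ [Λ/2, Λ]
  have hlow : ∀ t ∈ Set.Icc (Λ/2) Λ, 2*c₀/k ≤ g t := by
    intro t ht
    have htk : k < t := lt_of_lt_of_le (by linarith) ht.1
    have hγ2 : μ/(6*(k*sq1)) ≤ (gam μ k)^2 := by
      have ha := gam_sq_ge hμ hek (hkδ.trans (min_le_left _ _))
      have hb : μ/(6*(k*sq1)) ≤ μ/(6*disp μ k) := by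
        apply div_le_div_of_nonneg_left hμ.le (by positivity)
        have h1 : disp μ k ≤ k * sq1 := disp_le_of hμ.le hk0.le (by linarith)
        linarith
      linarith
    have hkey : c₀/k^2 ≤ μ*v₀*(gam μ k)^2*(Λ/8)*(Λ/8) / (8*k*(2*disp μ Λ)) := by
      have heq : c₀/k^2 = μ*v₀*(μ/(6*(k*sq1)))*(Λ/8)*(Λ/8) / (8*k*(2*disp μ Λ)) := by
        rw [hc₀def]
        field_simp
        ring
      rw [heq]
      gcongr
    have hptw : ∀ s ∈ Set.Icc (-k) k, c₀/k^2 ≤ F t s := by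
      intro s hs
      exact hkey.trans (Fint_lb hμ hv hΛ hk0 hkΛ4 hγk ht.1 ht.2 hs.1 hs.2)
    have h2 : (∫ _ in (-k)..k, c₀/k^2) ≤ g t := by
      apply intervalIntegral.integral_mono_on (by linarith) intervalIntegrable_const
        (hFcont t htk) hptw
    rw [intervalIntegral.integral_const, smul_eq_mul] at h2
    have h3 : (k - (-k)) * (c₀/k^2) = 2*c₀/k := by
      field_simp
      ring
    linarith [h2, h3.symm.le]
  -- assemble
  have hsub1 : Set.uIcc k (Λ/2) ⊆ Set.uIcc k Λ := by
    rw [Set.uIcc_of_le hkhalf, Set.uIcc_of_le hkΛ.le]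
    exact Set.Icc_subset_Icc le_rfl (by linarith)
  have hsub2 : Set.uIcc (Λ/2) Λ ⊆ Set.uIcc k Λ := by
    rw [Set.uIcc_of_le (by linarith), Set.uIcc_of_le hkΛ.le]
    exact Set.Icc_subset_Icc hkhalf le_rfl
  have hsplit : (∫ t in k..(Λ/2), g t) + ∫ t in (Λ/2)..Λ, g t = ∫ t in k..Λ, g t :=
    intervalIntegral.integral_add_adjacent_intervals (hgint.mono_set hsub1)
      (hgint.mono_set hsub2)
  have hpart1 : 0 ≤ ∫ t in k..(Λ/2), g t := by
    apply intervalIntegral.integral_nonneg hkhalf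
    intro t ht
    exact hgnonneg t ht.1
  have hpart2 : (Λ - Λ/2) * (2*c₀/k) ≤ ∫ t in (Λ/2)..Λ, g t := by
    have h1 : (∫ _ in (Λ/2)..Λ, 2*c₀/k) ≤ ∫ t in (Λ/2)..Λ, g t := by
      apply intervalIntegral.integral_mono_on (by linarith) intervalIntegrable_const
        (hgint.mono_set hsub2) hlow
    rwa [intervalIntegral.integral_const, smul_eq_mul] at h1
  have hI : Λ*c₀/k ≤ ∫ t in k..Λ, g t := by
    rw [← hsplit]
    have haux : Λ*c₀/k = (Λ - Λ/2) * (2*c₀/k) := by ring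
    linarith
  rw [hSig]
  have hrw : -(D*k⁻¹) = -(1/(4*Real.pi^2)) * (Λ*c₀/k) := by
    rw [hDdef]
    field_simp
  have hmul : (1/(4*Real.pi^2)) * (Λ*c₀/k) ≤ (1/(4*Real.pi^2)) * ∫ t in k..Λ, g t :=
    mul_le_mul_of_nonneg_left hI (by positivity)
  rw [hrw]
  linarith
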